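/- Let r ≥ 2 be an integer and λ ∈ (0, 4^r) a real number. Then the polynomial p(x) = (1−x)^{2r} − (−1)^r λ x^r has 2r distinct complex roots; that is, every root of p has multiplicity one (equivalently, p is squarefree over ℂ). -/

import Mathlib

open Polynomial

/-- For `r ≥ 2` and `λ ∈ (0, 4^r)`, the polynomial `p(X) = (1-X)^{2r} - (-1)^r λ X^r`
is squarefree over `ℂ` and has `2r` distinct complex roots (all of multiplicity one). -/
theorem charPoly_has_distinct_roots
    (r : ℕ) (hr : 2 ≤ r) (lam : ℝ) (hlam0 : 0 < lam) (hlam4 : lam < 4 ^ r) :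
    Squarefree ((1 - X) ^ (2 * r) - C ((-1) ^ r * (lam : ℂ)) * X ^ r) ∧
    ((1 - X) ^ (2 * r) - C ((-1) ^ r * (lam : ℂ)) * X ^ r).roots.card = 2 * r ∧
    ((1 - X) ^ (2 * r) - C ((-1) ^ r * (lam : ℂ)) * X ^ r).roots.Nodup := by
  set c : ℂ := (-1) ^ r * (lam : ℂ) with hc
  set p : ℂ[X] := (1 - X) ^ (2 * r) - C c * X ^ r with hp
  clear_value p
  have hc0 : c ≠ 0 := by
    simp [hc, hlam0.ne']
  have hlamne : (lam : ℂ) ≠ (4 : ℂ) ^ r := by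
    intro h
    have : lam = 4 ^ r := by exact_mod_cast h
    exact absurd this hlam4.ne
  -- degree computation
  have h1X : ((1 : ℂ[X]) - X).natDegree = 1 := by
    have : (1 : ℂ[X]) - X = -(X - C 1) := by ring_nf; simp [sub_eq_add_neg, add_comm]
    rw [this, natDegree_neg, natDegree_X_sub_C]
  have hdeg1 : (((1 : ℂ[X]) - X) ^ (2 * r)).natDegree = 2 * r := by
    rw [natDegree_pow, h1X, mul_one]
  have hrlt : (C c * X ^ r).natDegree < 2 * r := by
    calc (C c * X ^ r).natDegree ≤ (X ^ r : ℂ[X]).natDegree := natDegree_C_mul_le _ _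
      _ = r := natDegree_X_pow r
      _ < 2 * r := by omega
  have hpdeg : p.natDegree = 2 * r := by
    rw [hp, natDegree_sub_eq_left_of_natDegree_lt (by rw [hdeg1]; exact hrlt), hdeg1]
  -- separability
  have hsep : p.Separable := by
    rw [Polynomial.Separable, Polynomial.isCoprime_iff_aeval_ne_zero_of_isAlgClosed (k := ℂ) ℂ p (derivative p)]
    intro a
    by_contra h
    push_neg at h
    obtain ⟨h1, h2⟩ := h
    simp only [hp, map_sub, map_pow, map_mul, aeval_X, aeval_C, map_one, map_ofNat,
      sub_eq_zero] at h1
    have hd : derivative p =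
        -(((2 * r : ℕ) : ℂ[X]) * (1 - X) ^ (2 * r - 1))
          - C c * (((r : ℕ) : ℂ[X]) * X ^ (r - 1)) := by
      rw [hp, derivative_sub, derivative_pow, derivative_mul, derivative_C,
        derivative_X_pow, derivative_sub, derivative_one, derivative_X]
      simp only [C_eq_natCast]
      ring
    simp only [Algebra.algebraMap_self, RingHom.id_apply] at h1
    have h2' : (2 * r : ℂ) * (1 - a) ^ (2 * r - 1) + c * ((r : ℂ) * a ^ (r - 1)) = 0 := by
      rw [hd] at h2
      simp only [map_sub, map_neg, map_mul, map_pow, aeval_X, aeval_C, map_one,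
        map_natCast, map_ofNat, Nat.cast_mul, Nat.cast_ofNat, Algebra.algebraMap_self,
        RingHom.id_apply] at h2
      linear_combination -h2
    -- a ≠ 0
    have ha0 : a ≠ 0 := by
      rintro rfl
      simp [zero_pow (by omega : r ≠ 0)] at h1
    have ha1 : (1 : ℂ) - a ≠ 0 := by
      intro h
      have ha : a = 1 := by linear_combination -h
      rw [h, ha, zero_pow (by omega : 2 * r ≠ 0)] at h1
      exact hc0 (by simpa using h1.symm)
    -- from h2' and h1 derive a = -1
    have key : 2 * a * (1 - a) ^ (2 * r - 1) = -((1 - a) ^ (2 * r)) := by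
      have hr0 : (r : ℂ) ≠ 0 := Nat.cast_ne_zero.mpr (by omega)
      have harpow : c * a ^ r = (1 - a) ^ (2 * r) := h1.symm
      -- multiply h2' by a
      have hmul : (2 * r : ℂ) * (1 - a) ^ (2 * r - 1) * a + (r : ℂ) * (c * a ^ r) = 0 := by
        have hpow : a ^ (r - 1) * a = a ^ r := by
          rw [← pow_succ]; congr 1; omega
        linear_combination a * h2' - (r : ℂ) * c * hpow
      rw [harpow] at hmul
      have : (r : ℂ) * (2 * a * (1 - a) ^ (2 * r - 1) + (1 - a) ^ (2 * r)) = 0 := by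
        linear_combination hmul
      rcases mul_eq_zero.mp this with h | h
      · exact absurd h hr0
      · linear_combination h
    have haneg : a = -1 := by
      have hpowsplit : (1 - a) ^ (2 * r) = (1 - a) ^ (2 * r - 1) * (1 - a) := by
        rw [← pow_succ]; congr 1; omega
      rw [hpowsplit] at key
      have h3 : (1 - a) ^ (2 * r - 1) * (2 * a + (1 - a)) = 0 := by
        linear_combination key
      rcases mul_eq_zero.mp h3 with h | h
      · exact absurd h (pow_ne_zero _ ha1)
      · linear_combination h
    rw [haneg] at h1
    have : ((4 : ℂ)) ^ r = (lam : ℂ) := by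
      have h4 : ((1 : ℂ) - (-1)) ^ (2 * r) = 4 ^ r := by
        norm_num
        rw [pow_mul]
        norm_num
      rw [h4] at h1
      rw [hc] at h1
      have hm1 : ((-1 : ℂ)) ^ r * (-1 : ℂ) ^ r = 1 := by
        rw [← pow_add, ← two_mul, pow_mul]
        norm_num
      calc (4 : ℂ) ^ r = (-1) ^ r * (lam : ℂ) * (-1) ^ r := h1
        _ = (lam : ℂ) * ((-1) ^ r * (-1) ^ r) := by ring
        _ = (lam : ℂ) := by rw [hm1, mul_one]
    exact hlamne this.symm
  refine ⟨hsep.squarefree, ?_, nodup_roots hsep⟩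
  have hsplits : p.Splits := IsAlgClosed.splits p
  rw [← hpdeg]
  exact (splits_iff_card_roots.mp hsplits)
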